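/- There exist a fixed piece-wise linear set Σ of TGDs and a fixed Boolean CQ q such that the problem of deciding, given a database D as input, whether () ∈ cert(q,D,Σ), is undecidable; hence conjunctive query answering under piece-wise linear sets of TGDs is undecidable already in data complexity. -/

import Mathlib

/-! ### Core: terms, atoms, TGDs, CQs, certain answers -/

/-- Terms: constants ⊕ nulls ⊕ variables (each indexed by a natural number). -/
abbrev Term' : Type := ℕ ⊕ ℕ ⊕ ℕ

/-- The constant `n`. -/
def Term'.cst (n : ℕ) : Term' := Sum.inl n
/-- The labeled null `n`. -/
def Term'.nul (n : ℕ) : Term' := Sum.inr (Sum.inl n)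
/-- The variable `n`. -/
def Term'.var (n : ℕ) : Term' := Sum.inr (Sum.inr n)

def Term'.isVarB : Term' → Bool
  | Sum.inr (Sum.inr _) => true
  | _ => false

def Term'.isConstB : Term' → Bool
  | Sum.inl _ => true
  | _ => false

def Term'.isNullB : Term' → Bool
  | Sum.inr (Sum.inl _) => true
  | _ => false

/-- A (relational) atom: a predicate symbol together with a list of argument terms. -/
abbrev Atom : Type := ℕ × List Term'

/-- Apply a substitution to an atom. -/
def mapAtom (h : Term' → Term') (a : Atom) : Atom := (a.1, a.2.map h)

/-- A substitution is the identity on constants. -/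
def constPres (h : Term' → Term') : Prop := ∀ n, h (Term'.cst n) = Term'.cst n

/-- The variable `v` occurs in the set of atoms `A`. -/
def occursIn (A : Finset Atom) (v : ℕ) : Prop := ∃ a ∈ A, Term'.var v ∈ a.2

/-- A fact is an atom that contains only constants. -/
def isFact (a : Atom) : Prop := ∀ t ∈ a.2, Term'.isConstB t = true

/-- A tuple-generating dependency (TGD) `body → ∃ z̄ head`; the existentially
quantified variables are exactly the head variables not occurring in the body. -/
structure TGD where
  body : Finset Atom
  head : Finset Atom
deriving DecidableEq

/-- A TGD is well-formed if its body and head contain only variables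
(no constants and no nulls). -/
def TGD.wf (σ : TGD) : Prop := ∀ a ∈ σ.body ∪ σ.head, ∀ t ∈ a.2, Term'.isVarB t = true

/-- `v` is an existentially quantified variable of `σ`. -/
def isExistVar (σ : TGD) (v : ℕ) : Prop := occursIn σ.head v ∧ ¬ occursIn σ.body v

/-- An instance `I` (a set of atoms) satisfies a TGD: every homomorphism of the body
into `I` extends (on the body variables, in particular on the frontier) to a
homomorphism of the head into `I`. -/
def satTGD (I : Set Atom) (σ : TGD) : Prop :=
  ∀ h : Term' → Term', constPres h → (∀ a ∈ σ.body, mapAtom h a ∈ I) →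
    ∃ h' : Term' → Term', constPres h' ∧
      (∀ v, occursIn σ.body v → h' (Term'.var v) = h (Term'.var v)) ∧
      (∀ a ∈ σ.head, mapAtom h' a ∈ I)

/-- A conjunctive query: a tuple of output terms and a finite set of body atoms. -/
structure CQ where
  output : List Term'
  atoms : Finset Atom
deriving DecidableEq

/-- Well-formed CQ: no nulls in the atoms, and the output tuple consists of variables. -/
def CQ.wf (q : CQ) : Prop :=
  (∀ a ∈ q.atoms, ∀ t ∈ a.2, Term'.isNullB t = false) ∧
  (∀ t ∈ q.output, Term'.isVarB t = true)

/-- The evaluation `q(I)` of a CQ over an instance: all tuples of constants obtained as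
homomorphic images of the output tuple. -/
def CQ.eval (q : CQ) (I : Set Atom) : Set (List ℕ) :=
  { c | ∃ h : Term' → Term', constPres h ∧ (∀ a ∈ q.atoms, mapAtom h a ∈ I) ∧
        q.output.map h = c.map Term'.cst }

/-- The certain answers to `q` w.r.t. the database `D` and the set `S` of TGDs. -/
def cert (q : CQ) (D : Finset Atom) (S : Finset TGD) : Set (List ℕ) :=
  { c | ∀ I : Set Atom, ↑D ⊆ I → (∀ σ ∈ S, satTGD I σ) → c ∈ q.eval I }

/-- The active domain of a database: all constants occurring in it. -/
def adom (D : Finset Atom) : Set ℕ := { n | ∃ a ∈ D, Term'.cst n ∈ a.2 }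

/-! ### Wardedness, piece-wise linearity, predicate levels -/

/-- The predicate `p` occurs in the set of atoms `A`. -/
def occursPredIn (A : Finset Atom) (p : ℕ) : Prop := ∃ a ∈ A, a.1 = p

/-- The affected positions of (the schema of) `S`: `Affected S p i` says that the
`i`-th position of predicate `p` is affected. -/
inductive Affected (S : Finset TGD) : ℕ → ℕ → Prop
  | base (σ : TGD) (hσ : σ ∈ S) (v : ℕ) (hv : isExistVar σ v)
      (a : Atom) (ha : a ∈ σ.head) (i : ℕ) (hi : a.2[i]? = some (Term'.var v)) :
      Affected S a.1 i
  | step (σ : TGD) (hσ : σ ∈ S) (v : ℕ)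
      (hb : occursIn σ.body v) (hh : occursIn σ.head v)
      (hall : ∀ b ∈ σ.body, ∀ j : ℕ, b.2[j]? = some (Term'.var v) → Affected S b.1 j)
      (a : Atom) (ha : a ∈ σ.head) (i : ℕ) (hi : a.2[i]? = some (Term'.var v)) :
      Affected S a.1 i

/-- A body variable of `σ` is harmless if at least one of its occurrences in the body
is at a non-affected position. -/
def harmless (S : Finset TGD) (σ : TGD) (v : ℕ) : Prop :=
  ∃ b ∈ σ.body, ∃ i : ℕ, b.2[i]? = some (Term'.var v) ∧ ¬ Affected S b.1 i

/-- A body variable is dangerous if it is harmful (not harmless) and is a frontier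
variable (it occurs in the head). -/
def dangerous (S : Finset TGD) (σ : TGD) (v : ℕ) : Prop :=
  occursIn σ.body v ∧ occursIn σ.head v ∧ ¬ harmless S σ v

/-- `S` is warded: each TGD either has no dangerous body variables, or has a body atom
(a ward) containing all dangerous variables and sharing only harmless variables with
the rest of the body. -/
def Warded (S : Finset TGD) : Prop :=
  ∀ σ ∈ S, (∀ v, ¬ dangerous S σ v) ∨
    ∃ α ∈ σ.body, (∀ v, dangerous S σ v → Term'.var v ∈ α.2) ∧
      (∀ v, Term'.var v ∈ α.2 → occursIn (σ.body.erase α) v → harmless S σ v)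

/-- Edge of the predicate graph of `S`. -/
def pgEdge (S : Finset TGD) (p r : ℕ) : Prop :=
  ∃ σ ∈ S, occursPredIn σ.body p ∧ occursPredIn σ.head r

/-- Two predicates are mutually recursive if they lie on a common cycle of the
predicate graph. -/
def mutRec (S : Finset TGD) (p r : ℕ) : Prop :=
  Relation.TransGen (pgEdge S) p r ∧ Relation.TransGen (pgEdge S) r p

/-- `S` is piece-wise linear: each TGD has at most one body atom whose predicate is
mutually recursive with a predicate of its head. -/
def PWL (S : Finset TGD) : Prop :=
  ∀ σ ∈ S, ∀ α ∈ σ.body, ∀ β ∈ σ.body,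
    (∃ γ ∈ σ.head, mutRec S α.1 γ.1) → (∃ γ ∈ σ.head, mutRec S β.1 γ.1) → α = β

/-- Every TGD of `S` has exactly one head atom. -/
def singleHead (S : Finset TGD) : Prop := ∀ σ ∈ S, σ.head.card = 1

/-- The predicates occurring in `S` (as a set). -/
def schP (S : Finset TGD) : Set ℕ :=
  { p | ∃ σ ∈ S, occursPredIn σ.body p ∨ occursPredIn σ.head p }

/-- The predicates occurring in `S` (as a finite set). -/
def schF (S : Finset TGD) : Finset ℕ :=
  S.sup (fun σ => (σ.body ∪ σ.head).image (fun a => a.1))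

/-- `lvl` is the (unique) level function of `S`:
`lvl p = max { lvl r | (r,p) an edge of the predicate graph, r not mutually recursive
with p } + 1` (with `max ∅ = 0`). -/
def IsLevelFn (S : Finset TGD) (lvl : ℕ → ℕ) : Prop :=
  ∀ p ∈ schP S,
    (∀ r, pgEdge S r p → ¬ mutRec S r p → lvl r < lvl p) ∧
    (lvl p = 1 ∨ ∃ r, pgEdge S r p ∧ ¬ mutRec S r p ∧ lvl p = lvl r + 1)

/-- The maximal body size of a TGD of `S`. -/
def maxBody (S : Finset TGD) : ℕ := S.sup (fun σ => σ.body.card)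

/-- `f_{WARD∩PWL}(n, S) = (n+1) · max_{P ∈ sch(S)} level(P) · max_{σ ∈ S} |body(σ)|`,
where `n` is the number of atoms of the CQ (resp. the cardinality of the atom set). -/
def fWardPwl (n : ℕ) (S : Finset TGD) (lvl : ℕ → ℕ) : ℕ :=
  (n + 1) * (schF S).sup lvl * maxBody S

/-- `f_{WARD}(n, S) = 2 · max (n, max_{σ ∈ S} |body(σ)|)`. -/
def fWard (n : ℕ) (S : Finset TGD) : ℕ := 2 * max n (maxBody S)


/- ### auxiliary development -/

namespace PwlU
open Turing Turing.PartrecToTM2 StateTransition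

abbrev St : Type := TM2.Stmt (fun _ : K' => Γ') Λ' (Option Γ')

noncomputable local instance : DecidableEq St := Classical.decEq _
noncomputable local instance : DecidableEq Stmt' := Classical.decEq _

/-- binary length -/
def blen : ℕ → ℕ
  | 0 => 0
  | (n+1) => blen ((n+1)/2) + 1
decreasing_by exact Nat.div_lt_self (Nat.succ_pos n) one_lt_two

theorem blen_pos {m : ℕ} (h : 0 < m) : blen m = blen (m/2) + 1 := by
  cases m with
  | zero => omega
  | succ n => rw [blen]

theorem blen_pow (e : ℕ) : blen (2^e - 1) = e := by
  induction e with
  | zero => simp [blen]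
  | succ e ih =>
    have h1 : (2:ℕ)^(e+1) - 1 = 2*(2^e - 1) + 1 := by
      have : (1:ℕ) ≤ 2^e := Nat.one_le_two_pow
      ring_nf; omega
    have h2 : (2*(2^e - 1) + 1)/2 = 2^e - 1 := by omega
    rw [h1, blen_pos (by omega), h2, ih]

def F : List.Vector ℕ 1 →. ℕ :=
  fun v => Nat.Partrec.Code.eval (Denumerable.ofNat Nat.Partrec.Code (blen v.head)) 0

theorem blen_primrec : Primrec blen := by
  have := Primrec.nat_strong_rec (fun _ : Unit => blen)
    (g := fun _ l => some (if l.length = 0 then 0 else l.getD (l.length / 2) 0 + 1)) ?_ ?_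
  · exact this.comp (Primrec.const ()) Primrec.id
  · apply Primrec.option_some.comp
    apply Primrec.ite
    · exact Primrec.eq.comp (Primrec.list_length.comp Primrec.snd) (Primrec.const 0)
    · exact Primrec.const 0
    · exact Primrec.succ.comp <| (Primrec.list_getD 0).comp
        (Primrec.snd)
        (Primrec.nat_div.comp (Primrec.list_length.comp Primrec.snd) (Primrec.const 2))
  · intro _ n
    simp only [List.length_map, List.length_range, Option.some.injEq]
    cases n with
    | zero => simp [blen]
    | succ n =>
      rw [if_neg (by omega)]
      have hlt : (n+1)/2 < n+1 := Nat.div_lt_self (Nat.succ_pos n) one_lt_two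
      rw [List.getD_eq_getElem?_getD]
      rw [List.getElem?_map, List.getElem?_range hlt]
      simp [blen_pos (Nat.succ_pos n)]

theorem F_part : Partrec F := by
  apply Nat.Partrec.Code.eval_part.comp _ (Computable.const 0)
  exact (Computable.ofNat _).comp ((blen_primrec.to_comp).comp Computable.vector_head)

noncomputable def cU : Turing.ToPartrec.Code :=
  (Turing.ToPartrec.Code.exists_code (Nat.Partrec'.of_part F_part)).choose

theorem cU_spec : ∀ v : List.Vector ℕ 1, cU.eval v.1 = pure <$> F v :=
  (Turing.ToPartrec.Code.exists_code (Nat.Partrec'.of_part F_part)).choose_spec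

noncomputable def l₀ : Λ' := trNormal cU Cont'.halt
noncomputable def SS : Finset Λ' := codeSupp cU Cont'.halt

theorem l₀_mem : l₀ ∈ SS := (tr_supports cU Cont'.halt).1

theorem SS_supp : ∀ l ∈ SS, TM2.SupportsStmt SS (tr l) := (tr_supports cU Cont'.halt).2

noncomputable def QS : Finset St := SS.biUnion fun l => TM2.stmts₁ (tr l)

theorem tr_mem_QS {l : Λ'} (h : l ∈ SS) : tr l ∈ QS :=
  Finset.mem_biUnion.2 ⟨l, h, TM2.stmts₁_self⟩

theorem QS_sub {q q' : St} (h : q ∈ QS) (h' : q' ∈ TM2.stmts₁ q) : q' ∈ QS := by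
  obtain ⟨l, hl, hq⟩ := Finset.mem_biUnion.1 h
  exact Finset.mem_biUnion.2 ⟨l, hl, TM2.stmts₁_trans hq h'⟩

theorem QS_supp {q : St} (h : q ∈ QS) : TM2.SupportsStmt SS q := by
  obtain ⟨l, hl, hq⟩ := Finset.mem_biUnion.1 h
  exact TM2.stmts₁_supportsStmt_mono hq (SS_supp l hl)

/-- Micro configurations. -/
abbrev MCfg : Type := St × (Option Γ') × (K' → List Γ')

@[simp] def mstep : MCfg → Option MCfg
  | (TM2.Stmt.push k f q, v, S) => some (q, v, Function.update S k (f v :: S k))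
  | (TM2.Stmt.peek k f q, v, S) => some (q, f v (S k).head?, S)
  | (TM2.Stmt.pop k f q, v, S) => some (q, f v (S k).head?, Function.update S k (S k).tail)
  | (TM2.Stmt.load a q, v, S) => some (q, a v, S)
  | (TM2.Stmt.branch p q₁ q₂, v, S) => some (cond (p v) q₁ q₂, v, S)
  | (TM2.Stmt.goto f, v, S) => some (tr (f v), v, S)
  | (TM2.Stmt.halt, _, _) => none

theorem mstep_rel {a b : MCfg} (h : mstep a = some b) : b ∈ mstep a := h

/-- The micro configuration corresponding to a macro configuration. -/
def endOf (c : TM2.Cfg (fun _ : K' => Γ') Λ' (Option Γ')) : MCfg :=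
  match c.l with
  | some l => (tr l, c.var, c.stk)
  | none => (TM2.Stmt.halt, c.var, c.stk)

theorem claimA : ∀ (q : St) (v : Option Γ') (S : K' → List Γ'),
    Reaches mstep (q, v, S) (endOf (TM2.stepAux q v S)) := by
  intro q
  induction q with
  | push k f q ih => intro v S; exact Relation.ReflTransGen.head (mstep_rel rfl) (ih _ _)
  | peek k f q ih => intro v S; exact Relation.ReflTransGen.head (mstep_rel rfl) (ih _ _)
  | pop k f q ih => intro v S; exact Relation.ReflTransGen.head (mstep_rel rfl) (ih _ _)
  | load a q ih => intro v S; exact Relation.ReflTransGen.head (mstep_rel rfl) (ih _ _)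
  | branch p q₁ q₂ ih₁ ih₂ =>
    intro v S
    cases hp : p v
    · have h1 : mstep (TM2.Stmt.branch p q₁ q₂, v, S) = some (q₂, v, S) := by simp [hp]
      refine Relation.ReflTransGen.head (mstep_rel h1) ?_
      simpa [TM2.stepAux, hp, Reaches] using ih₂ v S
    · have h1 : mstep (TM2.Stmt.branch p q₁ q₂, v, S) = some (q₁, v, S) := by simp [hp]
      refine Relation.ReflTransGen.head (mstep_rel h1) ?_
      simpa [TM2.stepAux, hp, Reaches] using ih₁ v S
  | goto f => intro v S; exact Relation.ReflTransGen.single (mstep_rel rfl)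
  | halt => intro v S; exact Relation.ReflTransGen.refl

theorem mstep_QS {q q' : St} {v v' S S'} (h : q ∈ QS)
    (h' : mstep (q, v, S) = some (q', v', S')) : q' ∈ QS := by
  cases q with
  | push k f q =>
    simp only [mstep, Option.some.injEq, Prod.mk.injEq] at h'
    obtain ⟨rfl, -, -⟩ := h'
    exact QS_sub h (by simp [TM2.stmts₁, TM2.stmts₁_self])
  | peek k f q =>
    simp only [mstep, Option.some.injEq, Prod.mk.injEq] at h'
    obtain ⟨rfl, -, -⟩ := h'
    exact QS_sub h (by simp [TM2.stmts₁, TM2.stmts₁_self])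
  | pop k f q =>
    simp only [mstep, Option.some.injEq, Prod.mk.injEq] at h'
    obtain ⟨rfl, -, -⟩ := h'
    exact QS_sub h (by simp [TM2.stmts₁, TM2.stmts₁_self])
  | load a q =>
    simp only [mstep, Option.some.injEq, Prod.mk.injEq] at h'
    obtain ⟨rfl, -, -⟩ := h'
    exact QS_sub h (by simp [TM2.stmts₁, TM2.stmts₁_self])
  | branch p q₁ q₂ =>
    simp only [mstep, Option.some.injEq, Prod.mk.injEq] at h'
    obtain ⟨rfl, -, -⟩ := h'
    cases hp : p v <;> simp only [hp, cond_false, cond_true]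
    · exact QS_sub h (by simp [TM2.stmts₁, TM2.stmts₁_self])
    · exact QS_sub h (by simp [TM2.stmts₁, TM2.stmts₁_self])
  | goto f =>
    simp only [mstep, Option.some.injEq, Prod.mk.injEq] at h'
    obtain ⟨rfl, -, -⟩ := h'
    exact tr_mem_QS (QS_supp h v)
  | halt => simp [mstep] at h'

theorem reach_QS {m m' : MCfg} (h : Reaches mstep m m') (h0 : m.1 ∈ QS) : m'.1 ∈ QS := by
  induction h with
  | refl => exact h0
  | tail _ hstep ih =>
    rename_i b c _
    obtain ⟨q, v, S⟩ := b; obtain ⟨q', v', S'⟩ := c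
    exact mstep_QS ih hstep

theorem claimC0 {m m' : MCfg} (h : Reaches mstep m m') (hh : m'.1 = TM2.Stmt.halt) :
    (StateTransition.eval (TM2.step tr) (TM2.stepAux m.1 m.2.1 m.2.2)).Dom := by
  induction h using Relation.ReflTransGen.head_induction_on with
  | refl =>
    obtain ⟨q, v, S⟩ := m'
    cases hh
    exact Part.dom_iff_mem.2 ⟨_, StateTransition.mem_eval.2 ⟨Relation.ReflTransGen.refl, rfl⟩⟩
  | head hstep _ ih =>
    rename_i a b _
    obtain ⟨q, v, S⟩ := a
    replace hstep : mstep (q, v, S) = some b := hstep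
    cases q with
    | push k f q =>
      simp only [mstep, Option.some.injEq] at hstep; subst hstep; exact ih
    | peek k f q =>
      simp only [mstep, Option.some.injEq] at hstep; subst hstep; exact ih
    | pop k f q =>
      simp only [mstep, Option.some.injEq] at hstep; subst hstep; exact ih
    | load a q =>
      simp only [mstep, Option.some.injEq] at hstep; subst hstep; exact ih
    | branch p q₁ q₂ =>
      simp only [mstep, Option.some.injEq] at hstep; subst hstep
      cases hp : p v
      · simpa [TM2.stepAux, hp] using ih
      · simpa [TM2.stepAux, hp] using ih
    | goto f =>
      simp only [mstep, Option.some.injEq] at hstep; subst hstep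
      have hre : Reaches (TM2.step tr) (TM2.stepAux (TM2.Stmt.goto f) v S)
          (TM2.stepAux (tr (f v)) v S) := Relation.ReflTransGen.single rfl
      show (eval (TM2.step tr) (TM2.stepAux (TM2.Stmt.goto f) v S)).Dom
      rw [reaches_eval hre]
      exact ih
    | halt => simp [mstep] at hstep

theorem claimC {l v S} (h : ∃ v' S', Reaches mstep (tr l, v, S) (TM2.Stmt.halt, v', S')) :
    (StateTransition.eval (TM2.step tr) ⟨some l, v, S⟩).Dom := by
  obtain ⟨v', S', hr⟩ := h
  have h1 : Reaches (TM2.step tr) ⟨some l, v, S⟩ (TM2.stepAux (tr l) v S) :=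
    Relation.ReflTransGen.single rfl
  rw [reaches_eval h1]
  exact claimC0 hr rfl

theorem claimB0 {a b} (h : Reaches (TM2.step tr) a b) (hb : TM2.step tr b = none) :
    ∀ l v S, a = ⟨some l, v, S⟩ →
      ∃ v' S', Reaches mstep (tr l, v, S) (TM2.Stmt.halt, v', S') := by
  induction h using Relation.ReflTransGen.head_induction_on with
  | refl =>
    intro l v S h
    subst h
    simp [TM2.step] at hb
  | head hstep hrest ih =>
    rename_i a a₂
    intro l v S h
    subst h
    have ha₂ : a₂ = TM2.stepAux (tr l) v S := (Option.some.inj hstep).symm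
    subst ha₂
    rcases hl' : (TM2.stepAux (tr l) v S).l with _ | l'
    · -- halted after this macro step
      have hstop : TM2.step tr (TM2.stepAux (tr l) v S) = none := by
        rcases h : TM2.stepAux (tr l) v S with ⟨ll, vv, SS⟩
        rw [h] at hl'; cases hl'; rfl
      have hb2 : b = TM2.stepAux (tr l) v S := by
        rcases hrest.cases_head with h | ⟨c, hc, _⟩
        · exact h.symm
        · rw [hstop] at hc; cases hc
      have := claimA (tr l) v S
      rw [show endOf (TM2.stepAux (tr l) v S) =
        (TM2.Stmt.halt, (TM2.stepAux (tr l) v S).var, (TM2.stepAux (tr l) v S).stk) by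
          unfold endOf; rw [hl']] at this
      exact ⟨_, _, this⟩
    · have := ih l' (TM2.stepAux (tr l) v S).var (TM2.stepAux (tr l) v S).stk (by
        rcases h : TM2.stepAux (tr l) v S with ⟨ll, vv, SS⟩
        rw [h] at hl'; cases hl'; rfl)
      obtain ⟨v', S', hr⟩ := this
      refine ⟨v', S', Relation.ReflTransGen.trans ?_ hr⟩
      have := claimA (tr l) v S
      rwa [show endOf (TM2.stepAux (tr l) v S) =
        (tr l', (TM2.stepAux (tr l) v S).var, (TM2.stepAux (tr l) v S).stk) by
          unfold endOf; rw [hl']; rfl] at this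

theorem claimB {l v S} (h : (StateTransition.eval (TM2.step tr) ⟨some l, v, S⟩).Dom) :
    ∃ v' S', Reaches mstep (tr l, v, S) (TM2.Stmt.halt, v', S') := by
  obtain ⟨b, hb⟩ := Part.dom_iff_mem.1 h
  obtain ⟨hr, hstop⟩ := StateTransition.mem_eval.1 hb
  exact claimB0 hr hstop l v S rfl

/-- The initial micro configuration on input `m`. -/
noncomputable def m₀ (m : ℕ) : MCfg :=
  (tr l₀, none, K'.elim (trList [m]) [] [] [])

theorem halts_iff (m : ℕ) :
    (StateTransition.eval (TM2.step tr) (init cU [m])).Dom ↔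
      ∃ v' S', Reaches mstep (m₀ m) (TM2.Stmt.halt, v', S') := by
  constructor
  · intro h; exact claimB h
  · intro h; exact claimC h

theorem halts_iff' (m : ℕ) :
    (StateTransition.eval (TM2.step tr) (init cU [m])).Dom ↔
      (Nat.Partrec.Code.eval (Denumerable.ofNat Nat.Partrec.Code (blen m)) 0).Dom := by
  rw [PartrecToTM2.tr_eval]
  have h1 : cU.eval [m] = pure <$> F ⟨[m], rfl⟩ := cU_spec ⟨[m], rfl⟩
  show (Part.map _ (cU.eval [m])).Dom ↔ _
  rw [h1]
  rfl


/- ### Encoding of predicates, terms, rules -/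

def encG : Γ' → ℕ
  | Γ'.consₗ => 0
  | Γ'.cons => 1
  | Γ'.bit0 => 2
  | Γ'.bit1 => 3

theorem encG_inj : Function.Injective encG := by
  intro a b h; cases a <;> cases b <;> first | rfl | simp [encG] at h

theorem encG_le (s : Γ') : encG s ≤ 3 := by cases s <;> simp [encG]

def nd (w : List Γ') : ℕ := Encodable.encode (w.map encG)

theorem nd_inj : Function.Injective nd := fun a b h =>
  List.map_injective_iff.2 encG_inj (Encodable.encode_injective h)

def kIdx : K' → ℕ
  | K'.main => 0
  | K'.rev => 1
  | K'.aux => 2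
  | K'.stack => 3

def haltP : ℕ := 0
def rootP : ℕ := 1
def nodeP : ℕ := 2
def edgeP (s : Γ') : ℕ := 3 + encG s

theorem edgeP_inj {s s' : Γ'} (h : edgeP s = edgeP s') : s = s' :=
  encG_inj (by unfold edgeP at h; omega)

theorem edgeP_range (s : Γ') : 3 ≤ edgeP s ∧ edgeP s ≤ 6 := by
  have := encG_le s; unfold edgeP; omega

noncomputable def TQ : Finset (St × Option Γ') := QS ×ˢ Finset.univ

theorem mem_TQ {q : St} {v : Option Γ'} (h : q ∈ QS) : (q, v) ∈ TQ :=
  Finset.mem_product.2 ⟨h, Finset.mem_univ _⟩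

theorem mem_TQ' {x : St × Option Γ'} (h : x ∈ TQ) : x.1 ∈ QS :=
  (Finset.mem_product.1 h).1

noncomputable def pc (x : St × Option Γ') : ℕ :=
  if h : x ∈ TQ then 10 + (TQ.equivFin ⟨x, h⟩ : Fin _).val else 10

theorem pc_ge (x : St × Option Γ') : 10 ≤ pc x := by
  unfold pc; split <;> omega

theorem pc_inj {x y : St × Option Γ'} (hx : x ∈ TQ) (hy : y ∈ TQ) (h : pc x = pc y) : x = y := by
  unfold pc at h; rw [dif_pos hx, dif_pos hy] at h
  have h2 : TQ.equivFin ⟨x, hx⟩ = TQ.equivFin ⟨y, hy⟩ := Fin.ext (by omega)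
  have h3 := TQ.equivFin.injective h2
  exact congrArg Subtype.val h3

def ptr (k : K') : Term' := Term'.var (kIdx k)
def yv : Term' := Term'.var 4

noncomputable def confAtom (q : St) (v : Option Γ') (t : K' → Term') : Atom :=
  (pc (q, v), [t K'.main, t K'.rev, t K'.aux, t K'.stack])

noncomputable def ruleOf : St × Option Γ' → Finset TGD
  | (TM2.Stmt.push k f q, v) =>
    {⟨{confAtom (TM2.Stmt.push k f q) v ptr, (edgeP (f v), [ptr k, yv])},
      {confAtom q v (Function.update ptr k yv)}⟩}
  | (TM2.Stmt.peek k f q, v) =>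
    insert ⟨{confAtom (TM2.Stmt.peek k f q) v ptr, (rootP, [ptr k])},
            {confAtom q (f v none) ptr}⟩ <|
      Finset.univ.image fun s : Γ' =>
        ⟨{confAtom (TM2.Stmt.peek k f q) v ptr, (edgeP s, [yv, ptr k])},
          {confAtom q (f v (some s)) ptr}⟩
  | (TM2.Stmt.pop k f q, v) =>
    insert ⟨{confAtom (TM2.Stmt.pop k f q) v ptr, (rootP, [ptr k])},
            {confAtom q (f v none) ptr}⟩ <|
      Finset.univ.image fun s : Γ' =>
        ⟨{confAtom (TM2.Stmt.pop k f q) v ptr, (edgeP s, [yv, ptr k])},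
          {confAtom q (f v (some s)) (Function.update ptr k yv)}⟩
  | (TM2.Stmt.load a q, v) =>
    {⟨{confAtom (TM2.Stmt.load a q) v ptr}, {confAtom q (a v) ptr}⟩}
  | (TM2.Stmt.branch p q₁ q₂, v) =>
    {⟨{confAtom (TM2.Stmt.branch p q₁ q₂) v ptr}, {confAtom (cond (p v) q₁ q₂) v ptr}⟩}
  | (TM2.Stmt.goto f, v) =>
    {⟨{confAtom (TM2.Stmt.goto f) v ptr}, {confAtom (tr (f v)) v ptr}⟩}
  | (TM2.Stmt.halt, v) =>
    {⟨{confAtom TM2.Stmt.halt v ptr}, {(haltP, ([] : List Term'))}⟩}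

noncomputable def treeRule : TGD :=
  ⟨{(nodeP, [Term'.var 0])},
   (Finset.univ.image fun s : Γ' => (edgeP s, [Term'.var 0, Term'.var (1 + encG s)])) ∪
   (Finset.univ.image fun s : Γ' => (nodeP, [Term'.var (1 + encG s)]))⟩

noncomputable def Rules : Finset TGD := insert treeRule (TQ.biUnion ruleOf)

def Q0 : CQ := ⟨[], {(haltP, ([] : List Term'))}⟩

theorem treeRule_mem : treeRule ∈ Rules := Finset.mem_insert_self _ _

theorem ruleOf_mem {x : St × Option Γ'} (hx : x ∈ TQ) {σ : TGD} (hσ : σ ∈ ruleOf x) :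
    σ ∈ Rules :=
  Finset.mem_insert_of_mem (Finset.mem_biUnion.2 ⟨x, hx, hσ⟩)

theorem rules_cases {σ : TGD} (h : σ ∈ Rules) :
    σ = treeRule ∨ ∃ x ∈ TQ, σ ∈ ruleOf x := by
  rcases Finset.mem_insert.1 h with h | h
  · exact Or.inl h
  · obtain ⟨x, hx, hσ⟩ := Finset.mem_biUnion.1 h
    exact Or.inr ⟨x, hx, hσ⟩

/- ### Well-formedness -/

@[simp] theorem isVarB_var (n : ℕ) : Term'.isVarB (Term'.var n) = true := rfl
@[simp] theorem isVarB_ptr (k : K') : Term'.isVarB (ptr k) = true := rfl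
@[simp] theorem isVarB_yv : Term'.isVarB yv = true := rfl
@[simp] theorem isVarB_updPtr (k j : K') :
    Term'.isVarB (Function.update ptr k yv j) = true := by
  rcases eq_or_ne j k with rfl | h
  · simp
  · rw [Function.update_of_ne h]; simp

theorem rules_wf : ∀ σ ∈ Rules, TGD.wf σ := by
  intro σ hσ
  rcases rules_cases hσ with rfl | ⟨⟨q, v⟩, hx, hσ⟩
  · intro a ha
    simp only [treeRule, Finset.mem_union, Finset.mem_insert, Finset.mem_singleton,
      Finset.mem_image, Finset.mem_univ, true_and] at ha
    rcases ha with (rfl | ⟨s, rfl⟩ | ⟨s, rfl⟩) <;> (intro t ht; fin_cases ht <;> simp)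
  · cases q with
    | push k f q =>
      simp only [ruleOf, Finset.mem_singleton] at hσ
      subst hσ
      intro a ha
      simp only [Finset.mem_union, Finset.mem_insert, Finset.mem_singleton] at ha
      rcases ha with ((rfl | rfl) | rfl) <;>
        (intro t ht; simp only [confAtom] at ht; fin_cases ht <;> simp)
    | peek k f q =>
      simp only [ruleOf, Finset.mem_insert, Finset.mem_image, Finset.mem_univ, true_and] at hσ
      rcases hσ with rfl | ⟨s, rfl⟩ <;>
      · intro a ha
        simp only [Finset.mem_union, Finset.mem_insert, Finset.mem_singleton] at ha
        rcases ha with ((rfl | rfl) | rfl) <;>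
          (intro t ht; simp only [confAtom] at ht; fin_cases ht <;> simp)
    | pop k f q =>
      simp only [ruleOf, Finset.mem_insert, Finset.mem_image, Finset.mem_univ, true_and] at hσ
      rcases hσ with rfl | ⟨s, rfl⟩ <;>
      · intro a ha
        simp only [Finset.mem_union, Finset.mem_insert, Finset.mem_singleton] at ha
        rcases ha with ((rfl | rfl) | rfl) <;>
          (intro t ht; simp only [confAtom] at ht; fin_cases ht <;> simp)
    | load g q =>
      simp only [ruleOf, Finset.mem_singleton] at hσ
      subst hσ
      intro a ha
      simp only [Finset.mem_union, Finset.mem_singleton] at ha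
      rcases ha with rfl | rfl <;>
        (intro t ht; simp only [confAtom] at ht; fin_cases ht <;> simp)
    | branch p q₁ q₂ =>
      simp only [ruleOf, Finset.mem_singleton] at hσ
      subst hσ
      intro a ha
      simp only [Finset.mem_union, Finset.mem_singleton] at ha
      rcases ha with rfl | rfl <;>
        (intro t ht; simp only [confAtom] at ht; fin_cases ht <;> simp)
    | goto f =>
      simp only [ruleOf, Finset.mem_singleton] at hσ
      subst hσ
      intro a ha
      simp only [Finset.mem_union, Finset.mem_singleton] at ha
      rcases ha with rfl | rfl <;>
        (intro t ht; simp only [confAtom] at ht; fin_cases ht <;> simp)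
    | halt =>
      simp only [ruleOf, Finset.mem_singleton] at hσ
      subst hσ
      intro a ha
      simp only [Finset.mem_union, Finset.mem_singleton] at ha
      rcases ha with rfl | rfl <;>
        (intro t ht; simp only [confAtom] at ht; fin_cases ht <;> simp)

theorem Q0_wf : CQ.wf Q0 := by
  constructor
  · intro a ha t ht
    simp only [Q0, Finset.mem_singleton] at ha
    subst ha; simp at ht
  · intro t ht; simp [Q0] at ht

/- ### Piece-wise linearity -/

def GoodP (p : ℕ) : Prop := p = 0 ∨ 10 ≤ p

theorem head_good : ∀ x ∈ TQ, ∀ σ ∈ ruleOf x, ∀ p, occursPredIn σ.head p → GoodP p := by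
  rintro ⟨q, v⟩ hx σ hσ p ⟨a, ha, rfl⟩
  cases q <;>
    simp only [ruleOf, Finset.mem_singleton, Finset.mem_insert, Finset.mem_image,
      Finset.mem_univ, true_and] at hσ
  case push k f q' =>
    subst hσ; simp only [Finset.mem_singleton] at ha; subst ha; exact Or.inr (pc_ge _)
  case peek k f q' =>
    rcases hσ with rfl | ⟨s, rfl⟩ <;>
    · simp only [Finset.mem_singleton] at ha
      subst ha
      exact Or.inr (pc_ge _)
  case pop k f q' =>
    rcases hσ with rfl | ⟨s, rfl⟩ <;>
    · simp only [Finset.mem_singleton] at ha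
      subst ha
      exact Or.inr (pc_ge _)
  case load g q' =>
    subst hσ; simp only [Finset.mem_singleton] at ha; subst ha; exact Or.inr (pc_ge _)
  case branch g q₁ q₂ =>
    subst hσ; simp only [Finset.mem_singleton] at ha; subst ha; exact Or.inr (pc_ge _)
  case goto f =>
    subst hσ; simp only [Finset.mem_singleton] at ha; subst ha; exact Or.inr (pc_ge _)
  case halt =>
    subst hσ; simp only [Finset.mem_singleton] at ha; subst ha; exact Or.inl rfl

theorem pgEdge_good {p r : ℕ} (h : pgEdge Rules p r) (hp : GoodP p) : GoodP r := by
  obtain ⟨σ, hσ, ⟨a, ha, rfl⟩, hr⟩ := h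
  rcases rules_cases hσ with rfl | ⟨x, hx, hm⟩
  · simp only [treeRule, Finset.mem_singleton] at ha
    subst ha
    simp only [GoodP, nodeP] at hp
    omega
  · exact head_good x hx σ hm _ hr

theorem tg_good {p r : ℕ} (h : Relation.TransGen (pgEdge Rules) p r) (hp : GoodP p) : GoodP r := by
  induction h with
  | single h => exact pgEdge_good h hp
  | tail _ h ih => exact pgEdge_good h ih

theorem not_good_edgeP (s : Γ') : ¬ GoodP (edgeP s) := by
  have := edgeP_range s; rintro (h | h) <;> omega

theorem not_good_rootP : ¬ GoodP rootP := by
  rintro (h | h) <;> simp [rootP] at h <;> omega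

theorem rules_pwl : PWL Rules := by
  intro σ hσ α hα β hβ hαr hβr
  rcases rules_cases hσ with rfl | ⟨⟨q, v⟩, hx, hm⟩
  · simp only [treeRule, Finset.mem_singleton] at hα hβ
    rw [hα, hβ]
  · have key : ∀ (m : Atom), m ∈ σ.body → (∃ γ ∈ σ.head, mutRec Rules m.1 γ.1) → GoodP m.1 := by
      rintro m hm' ⟨γ, hγ, hmr⟩
      exact tg_good hmr.2 (head_good _ hx σ hm γ.1 ⟨γ, hγ, rfl⟩)
    have hgα : GoodP α.1 := key α hα hαr
    have hgβ : GoodP β.1 := key β hβ hβr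
    clear key hαr hβr
    cases q with
    | push k f q =>
      simp only [ruleOf, Finset.mem_singleton] at hm
      subst hm
      simp only [Finset.mem_insert, Finset.mem_singleton] at hα hβ
      rcases hα with rfl | rfl
      · rcases hβ with rfl | rfl
        · rfl
        · exact absurd hgβ (not_good_edgeP _)
      · exact absurd hgα (not_good_edgeP _)
    | peek k f q =>
      simp only [ruleOf, Finset.mem_insert, Finset.mem_image, Finset.mem_univ, true_and] at hm
      rcases hm with rfl | ⟨s, rfl⟩ <;>
        simp only [Finset.mem_insert, Finset.mem_singleton] at hα hβ
      · rcases hα with rfl | rfl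
        · rcases hβ with rfl | rfl
          · rfl
          · exact absurd hgβ not_good_rootP
        · exact absurd hgα not_good_rootP
      · rcases hα with rfl | rfl
        · rcases hβ with rfl | rfl
          · rfl
          · exact absurd hgβ (not_good_edgeP _)
        · exact absurd hgα (not_good_edgeP _)
    | pop k f q =>
      simp only [ruleOf, Finset.mem_insert, Finset.mem_image, Finset.mem_univ, true_and] at hm
      rcases hm with rfl | ⟨s, rfl⟩ <;>
        simp only [Finset.mem_insert, Finset.mem_singleton] at hα hβ
      · rcases hα with rfl | rfl
        · rcases hβ with rfl | rfl
          · rfl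
          · exact absurd hgβ not_good_rootP
        · exact absurd hgα not_good_rootP
      · rcases hα with rfl | rfl
        · rcases hβ with rfl | rfl
          · rfl
          · exact absurd hgβ (not_good_edgeP _)
        · exact absurd hgα (not_good_edgeP _)
    | load g q =>
      simp only [ruleOf, Finset.mem_singleton] at hm
      subst hm
      simp only [Finset.mem_singleton] at hα hβ
      rw [hα, hβ]
    | branch g q₁ q₂ =>
      simp only [ruleOf, Finset.mem_singleton] at hm
      subst hm
      simp only [Finset.mem_singleton] at hα hβ
      rw [hα, hβ]
    | goto f =>
      simp only [ruleOf, Finset.mem_singleton] at hm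
      subst hm
      simp only [Finset.mem_singleton] at hα hβ
      rw [hα, hβ]
    | halt =>
      simp only [ruleOf, Finset.mem_singleton] at hm
      subst hm
      simp only [Finset.mem_singleton] at hα hβ
      rw [hα, hβ]

/- ### Homomorphism helpers -/

def asg (g : ℕ → Term') : Term' → Term'
  | Sum.inr (Sum.inr n) => g n
  | x => x

theorem constPres_asg (g : ℕ → Term') : constPres (asg g) := fun _ => rfl

@[simp] theorem asg_var (g : ℕ → Term') (n : ℕ) : asg g (Term'.var n) = g n := rfl

def tasg (t : K' → Term') (y : Term') : ℕ → Term' := fun n =>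
  if n = 0 then t K'.main else if n = 1 then t K'.rev else if n = 2 then t K'.aux
  else if n = 3 then t K'.stack else y

@[simp] theorem tasg_kIdx (t : K' → Term') (y : Term') (j : K') :
    tasg t y (kIdx j) = t j := by cases j <;> rfl

@[simp] theorem asg_ptr (t : K' → Term') (y : Term') (j : K') :
    asg (tasg t y) (ptr j) = t j := by cases j <;> rfl

@[simp] theorem asg_yv (t : K' → Term') (y : Term') : asg (tasg t y) yv = y := rfl

@[simp] theorem mapAtom_pair (h : Term' → Term') (p : ℕ) (l : List Term') :
    mapAtom h (p, l) = (p, l.map h) := rfl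

theorem mapConf (t : K' → Term') (y : Term') (q : St) (v : Option Γ') :
    mapAtom (asg (tasg t y)) (confAtom q v ptr) = confAtom q v t := by
  simp [confAtom, mapAtom]

theorem occ_conf {B : Finset Atom} {q : St} {v : Option Γ'}
    (h : confAtom q v ptr ∈ B) (j : K') : occursIn B (kIdx j) :=
  ⟨_, h, by cases j <;> simp [confAtom, ptr, kIdx]⟩

/- ### Representation of stacks in a model -/

def Rep (I : Set Atom) : List Γ' → Term' → Prop
  | [], t => (rootP, [t]) ∈ I ∧ (nodeP, [t]) ∈ I
  | s :: w, t => (nodeP, [t]) ∈ I ∧ ∃ t', (edgeP s, [t', t]) ∈ I ∧ Rep I w t'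

theorem Rep.node {I : Set Atom} {w : List Γ'} {t : Term'} (h : Rep I w t) :
    (nodeP, [t]) ∈ I := by
  cases w with
  | nil => exact h.2
  | cons s w => exact h.1

theorem rep_extend {I : Set Atom} (hI : ∀ σ ∈ Rules, satTGD I σ) {w : List Γ'} {t : Term'}
    (h : Rep I w t) (s : Γ') : ∃ t', (edgeP s, [t, t']) ∈ I ∧ Rep I (s :: w) t' := by
  obtain ⟨h', hcp, hag, hhd⟩ := hI treeRule treeRule_mem (asg fun _ => t) (constPres_asg _)
    (by
      intro a ha
      simp only [treeRule, Finset.mem_singleton] at ha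
      subst ha
      simpa [mapAtom] using h.node)
  have h0 : h' (Term'.var 0) = t := by
    rw [hag 0 ⟨(nodeP, [Term'.var 0]), by simp [treeRule], by simp⟩]
    rfl
  have hedge : (edgeP s, [t, h' (Term'.var (1 + encG s))]) ∈ I := by
    have := hhd (edgeP s, [Term'.var 0, Term'.var (1 + encG s)])
      (Finset.mem_union_left _ (Finset.mem_image.2 ⟨s, Finset.mem_univ s, rfl⟩))
    simpa [mapAtom, h0] using this
  have hnode : (nodeP, [h' (Term'.var (1 + encG s))]) ∈ I := by
    have := hhd (nodeP, [Term'.var (1 + encG s)])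
      (Finset.mem_union_right _ (Finset.mem_image.2 ⟨s, Finset.mem_univ s, rfl⟩))
    simpa [mapAtom] using this
  exact ⟨h' (Term'.var (1 + encG s)), hedge, hnode, t, hedge, h⟩

/- ### One micro-step preservation -/

theorem step_pres {I : Set Atom} (hI : ∀ σ ∈ Rules, satTGD I σ) {q q' : St}
    {v v' : Option Γ'} {S S' : K' → List Γ'} (hq : q ∈ QS)
    (hst : mstep (q, v, S) = some (q', v', S')) {t : K' → Term'}
    (hrep : ∀ k, Rep I (S k) (t k)) (hc : confAtom q v t ∈ I) :
    ∃ t' : K' → Term', (∀ k, Rep I (S' k) (t' k)) ∧ confAtom q' v' t' ∈ I := by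
  have hx : (q, v) ∈ TQ := mem_TQ hq
  cases q with
  | push k f q₁ =>
    simp only [mstep, Option.some.injEq, Prod.mk.injEq] at hst
    obtain ⟨rfl, rfl, rfl⟩ := hst
    obtain ⟨u, hedge, hrepu⟩ := rep_extend hI (hrep k) (f v)
    obtain ⟨h', hcp, hag, hhd⟩ := hI _ (ruleOf_mem hx (Finset.mem_singleton_self _))
      (asg (tasg t u)) (constPres_asg _)
      (by
        intro a ha
        simp only [Finset.mem_insert, Finset.mem_singleton] at ha
        rcases ha with rfl | rfl
        · rw [mapConf]; exact hc
        · simpa [mapAtom] using hedge)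
    have hb1 : confAtom (TM2.Stmt.push k f q₁) v ptr ∈
        ({confAtom (TM2.Stmt.push k f q₁) v ptr, (edgeP (f v), [ptr k, yv])} : Finset Atom) := by
      simp
    have hptr : ∀ j, h' (ptr j) = t j := by
      intro j
      rw [show ptr j = Term'.var (kIdx j) from rfl, hag (kIdx j) (occ_conf hb1 j)]
      simp
    have hyv : h' yv = u := by
      rw [show yv = Term'.var 4 from rfl,
        hag 4 ⟨(edgeP (f v), [ptr k, yv]), by simp, by simp [yv, Term'.var]⟩]
      rfl
    have hupd : ∀ j, h' (Function.update ptr k yv j) = Function.update t k u j := by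
      intro j
      rcases eq_or_ne j k with rfl | hne
      · simp [hyv]
      · rw [Function.update_of_ne hne, Function.update_of_ne hne, hptr]
    refine ⟨Function.update t k u, ?_, ?_⟩
    · intro j
      rcases eq_or_ne j k with rfl | hne
      · simpa [Function.update_self] using hrepu
      · simpa [Function.update_of_ne hne] using hrep j
    · have := hhd (confAtom q₁ v (Function.update ptr k yv)) (Finset.mem_singleton_self _)
      simpa [confAtom, mapAtom, hupd] using this
  | peek k f q₁ =>
    simp only [mstep, Option.some.injEq, Prod.mk.injEq] at hst
    obtain ⟨rfl, rfl, rfl⟩ := hst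
    rcases hw : S k with _ | ⟨s, w⟩
    · -- empty stack
      have hrepk := hrep k
      rw [hw] at hrepk
      obtain ⟨h', hcp, hag, hhd⟩ := hI _
        (ruleOf_mem hx (Finset.mem_insert_self _ _))
        (asg (tasg t (t k))) (constPres_asg _)
        (by
          intro a ha
          simp only [Finset.mem_insert, Finset.mem_singleton] at ha
          rcases ha with rfl | rfl
          · rw [mapConf]; exact hc
          · simpa [mapAtom] using hrepk.1)
      have hb1 : confAtom (TM2.Stmt.peek k f q₁) v ptr ∈
          ({confAtom (TM2.Stmt.peek k f q₁) v ptr, (rootP, [ptr k])} : Finset Atom) := by simp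
      have hptr : ∀ j, h' (ptr j) = t j := by
        intro j
        rw [show ptr j = Term'.var (kIdx j) from rfl, hag (kIdx j) (occ_conf hb1 j)]
        simp
      refine ⟨t, hrep, ?_⟩
      have := hhd (confAtom q₁ (f v none) ptr) (Finset.mem_singleton_self _)
      simpa [confAtom, mapAtom, hptr] using this
    · have hrepk := hrep k
      rw [hw] at hrepk
      obtain ⟨hnode, u, hedge, hrepw⟩ := hrepk
      obtain ⟨h', hcp, hag, hhd⟩ := hI _
        (ruleOf_mem hx (Finset.mem_insert_of_mem
          (Finset.mem_image.2 ⟨s, Finset.mem_univ s, rfl⟩)))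
        (asg (tasg t u)) (constPres_asg _)
        (by
          intro a ha
          simp only [Finset.mem_insert, Finset.mem_singleton] at ha
          rcases ha with rfl | rfl
          · rw [mapConf]; exact hc
          · simpa [mapAtom] using hedge)
      have hb1 : confAtom (TM2.Stmt.peek k f q₁) v ptr ∈
          ({confAtom (TM2.Stmt.peek k f q₁) v ptr, (edgeP s, [yv, ptr k])} : Finset Atom) := by
        simp
      have hptr : ∀ j, h' (ptr j) = t j := by
        intro j
        rw [show ptr j = Term'.var (kIdx j) from rfl, hag (kIdx j) (occ_conf hb1 j)]
        simp
      refine ⟨t, hrep, ?_⟩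
      have := hhd (confAtom q₁ (f v (some s)) ptr) (Finset.mem_singleton_self _)
      simpa [confAtom, mapAtom, hptr] using this
  | pop k f q₁ =>
    simp only [mstep, Option.some.injEq, Prod.mk.injEq] at hst
    obtain ⟨rfl, rfl, rfl⟩ := hst
    rcases hw : S k with _ | ⟨s, w⟩
    · have hrepk := hrep k
      rw [hw] at hrepk
      obtain ⟨h', hcp, hag, hhd⟩ := hI _
        (ruleOf_mem hx (Finset.mem_insert_self _ _))
        (asg (tasg t (t k))) (constPres_asg _)
        (by
          intro a ha
          simp only [Finset.mem_insert, Finset.mem_singleton] at ha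
          rcases ha with rfl | rfl
          · rw [mapConf]; exact hc
          · simpa [mapAtom] using hrepk.1)
      have hb1 : confAtom (TM2.Stmt.pop k f q₁) v ptr ∈
          ({confAtom (TM2.Stmt.pop k f q₁) v ptr, (rootP, [ptr k])} : Finset Atom) := by simp
      have hptr : ∀ j, h' (ptr j) = t j := by
        intro j
        rw [show ptr j = Term'.var (kIdx j) from rfl, hag (kIdx j) (occ_conf hb1 j)]
        simp
      refine ⟨t, ?_, ?_⟩
      · intro j
        rcases eq_or_ne j k with rfl | hne
        · rw [Function.update_self]
          exact hrepk
        · rw [Function.update_of_ne hne]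
          exact hrep j
      · have := hhd (confAtom q₁ (f v none) ptr) (Finset.mem_singleton_self _)
        simpa [confAtom, mapAtom, hptr] using this
    · have hrepk := hrep k
      rw [hw] at hrepk
      obtain ⟨hnode, u, hedge, hrepw⟩ := hrepk
      obtain ⟨h', hcp, hag, hhd⟩ := hI _
        (ruleOf_mem hx (Finset.mem_insert_of_mem
          (Finset.mem_image.2 ⟨s, Finset.mem_univ s, rfl⟩)))
        (asg (tasg t u)) (constPres_asg _)
        (by
          intro a ha
          simp only [Finset.mem_insert, Finset.mem_singleton] at ha
          rcases ha with rfl | rfl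
          · rw [mapConf]; exact hc
          · simpa [mapAtom] using hedge)
      have hb1 : confAtom (TM2.Stmt.pop k f q₁) v ptr ∈
          ({confAtom (TM2.Stmt.pop k f q₁) v ptr, (edgeP s, [yv, ptr k])} : Finset Atom) := by
        simp
      have hptr : ∀ j, h' (ptr j) = t j := by
        intro j
        rw [show ptr j = Term'.var (kIdx j) from rfl, hag (kIdx j) (occ_conf hb1 j)]
        simp
      have hyv : h' yv = u := by
        rw [show yv = Term'.var 4 from rfl,
          hag 4 ⟨(edgeP s, [yv, ptr k]), by simp, by simp [yv, Term'.var]⟩]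
        rfl
      have hupd : ∀ j, h' (Function.update ptr k yv j) = Function.update t k u j := by
        intro j
        rcases eq_or_ne j k with rfl | hne
        · simp [hyv]
        · rw [Function.update_of_ne hne, Function.update_of_ne hne, hptr]
      refine ⟨Function.update t k u, ?_, ?_⟩
      · intro j
        rcases eq_or_ne j k with rfl | hne
        · rw [Function.update_self, Function.update_self]
          exact hrepw
        · rw [Function.update_of_ne hne, Function.update_of_ne hne]
          exact hrep j
      · have := hhd (confAtom q₁ (f v (some s)) (Function.update ptr k yv))
          (Finset.mem_singleton_self _)
        simpa [confAtom, mapAtom, hupd] using this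
  | load g q₁ =>
    simp only [mstep, Option.some.injEq, Prod.mk.injEq] at hst
    obtain ⟨rfl, rfl, rfl⟩ := hst
    obtain ⟨h', hcp, hag, hhd⟩ := hI _ (ruleOf_mem hx (Finset.mem_singleton_self _))
      (asg (tasg t (t K'.main))) (constPres_asg _)
      (by
        intro a ha
        simp only [Finset.mem_singleton] at ha
        subst ha
        rw [mapConf]; exact hc)
    have hb1 : confAtom (TM2.Stmt.load g q₁) v ptr ∈
        ({confAtom (TM2.Stmt.load g q₁) v ptr} : Finset Atom) := by simp
    have hptr : ∀ j, h' (ptr j) = t j := by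
      intro j
      rw [show ptr j = Term'.var (kIdx j) from rfl, hag (kIdx j) (occ_conf hb1 j)]
      simp
    refine ⟨t, hrep, ?_⟩
    have := hhd (confAtom q₁ (g v) ptr) (Finset.mem_singleton_self _)
    simpa [confAtom, mapAtom, hptr] using this
  | branch p q₁ q₂ =>
    simp only [mstep, Option.some.injEq, Prod.mk.injEq] at hst
    obtain ⟨rfl, rfl, rfl⟩ := hst
    obtain ⟨h', hcp, hag, hhd⟩ := hI _ (ruleOf_mem hx (Finset.mem_singleton_self _))
      (asg (tasg t (t K'.main))) (constPres_asg _)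
      (by
        intro a ha
        simp only [Finset.mem_singleton] at ha
        subst ha
        rw [mapConf]; exact hc)
    have hb1 : confAtom (TM2.Stmt.branch p q₁ q₂) v ptr ∈
        ({confAtom (TM2.Stmt.branch p q₁ q₂) v ptr} : Finset Atom) := by simp
    have hptr : ∀ j, h' (ptr j) = t j := by
      intro j
      rw [show ptr j = Term'.var (kIdx j) from rfl, hag (kIdx j) (occ_conf hb1 j)]
      simp
    refine ⟨t, hrep, ?_⟩
    have := hhd (confAtom (cond (p v) q₁ q₂) v ptr) (Finset.mem_singleton_self _)
    simpa [confAtom, mapAtom, hptr] using this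
  | goto f =>
    simp only [mstep, Option.some.injEq, Prod.mk.injEq] at hst
    obtain ⟨rfl, rfl, rfl⟩ := hst
    obtain ⟨h', hcp, hag, hhd⟩ := hI _ (ruleOf_mem hx (Finset.mem_singleton_self _))
      (asg (tasg t (t K'.main))) (constPres_asg _)
      (by
        intro a ha
        simp only [Finset.mem_singleton] at ha
        subst ha
        rw [mapConf]; exact hc)
    have hb1 : confAtom (TM2.Stmt.goto f) v ptr ∈
        ({confAtom (TM2.Stmt.goto f) v ptr} : Finset Atom) := by simp
    have hptr : ∀ j, h' (ptr j) = t j := by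
      intro j
      rw [show ptr j = Term'.var (kIdx j) from rfl, hag (kIdx j) (occ_conf hb1 j)]
      simp
    refine ⟨t, hrep, ?_⟩
    have := hhd (confAtom (tr (f v)) v ptr) (Finset.mem_singleton_self _)
    simpa [confAtom, mapAtom, hptr] using this
  | halt => simp [mstep] at hst

/- ### Runs preserve configuration facts -/

theorem run_pres {I : Set Atom} (hI : ∀ σ ∈ Rules, satTGD I σ) {m m' : MCfg}
    (h : Reaches mstep m m') (hq : m.1 ∈ QS) {t : K' → Term'}
    (hrep : ∀ k, Rep I (m.2.2 k) (t k)) (hc : confAtom m.1 m.2.1 t ∈ I) :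
    ∃ t' : K' → Term', (∀ k, Rep I (m'.2.2 k) (t' k)) ∧ confAtom m'.1 m'.2.1 t' ∈ I := by
  induction h with
  | refl => exact ⟨t, hrep, hc⟩
  | tail hr hstep ih =>
    rename_i b c
    obtain ⟨t2, hrep2, hc2⟩ := ih
    obtain ⟨q2, v2, S2⟩ := b
    obtain ⟨q3, v3, S3⟩ := c
    exact step_pres hI (reach_QS hr hq) hstep hrep2 hc2

theorem complete_halt {I : Set Atom} (hI : ∀ σ ∈ Rules, satTGD I σ) {m : MCfg}
    (hq : m.1 ∈ QS) {t : K' → Term'} (hrep : ∀ k, Rep I (m.2.2 k) (t k))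
    (hc : confAtom m.1 m.2.1 t ∈ I) {v' : Option Γ'} {S' : K' → List Γ'}
    (hreach : Reaches mstep m (TM2.Stmt.halt, v', S')) :
    (haltP, ([] : List Term')) ∈ I := by
  obtain ⟨t', hrep', hc'⟩ := run_pres hI hreach hq hrep hc
  have hx : ((TM2.Stmt.halt : St), v') ∈ TQ := mem_TQ (reach_QS hreach hq)
  obtain ⟨h', hcp, hag, hhd⟩ := hI _ (ruleOf_mem hx (Finset.mem_singleton_self _))
    (asg (tasg t' (t' K'.main))) (constPres_asg _)
    (by
      intro a ha
      simp only [Finset.mem_singleton] at ha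
      subst ha
      rw [mapConf]; exact hc')
  have := hhd (haltP, ([] : List Term')) (Finset.mem_singleton_self _)
  simpa [mapAtom] using this

/- ### The database -/

def pn : ℕ → PosNum
  | 0 => 1
  | e+1 => (pn e).bit1

theorem pn_val (e : ℕ) : ((pn e : PosNum) : ℕ) = 2^(e+1) - 1 := by
  induction e with
  | zero => simp [pn]
  | succ e ih =>
    show ((PosNum.bit1 (pn e) : PosNum) : ℕ) = _
    rw [PosNum.cast_bit1, ih]
    have h1 : (1:ℕ) ≤ 2^(e+1) := Nat.one_le_two_pow
    have h2 : (2:ℕ)^(e+2) = 2^(e+1) + 2^(e+1) := by ring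
    omega

theorem trPosNum_pn (e : ℕ) : trPosNum (pn e) = List.replicate (e+1) Γ'.bit1 := by
  induction e with
  | zero => rfl
  | succ e ih =>
    show Γ'.bit1 :: trPosNum (pn e) = _
    rw [ih]
    rfl

theorem trNat_ones (e : ℕ) : trNat (2^e - 1) = List.replicate e Γ'.bit1 := by
  cases e with
  | zero => simpa using trNat_zero
  | succ e =>
    have h1 : (2^(e+1) - 1 : ℕ) = ((pn e : PosNum) : ℕ) := (pn_val e).symm
    rw [h1]
    show trNum ((((pn e : PosNum) : ℕ) : Num)) = _
    rw [← Num.ofNat'_eq, PosNum.of_to_nat']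
    show trPosNum (pn e) = _
    rw [trPosNum_pn]

def sym (i : ℕ) : Γ' := if i = 0 then Γ'.cons else Γ'.bit1

def wrd : ℕ → List Γ'
  | 0 => []
  | i+1 => sym i :: wrd i

theorem wrd_succ_eq (e : ℕ) : wrd (e+1) = List.replicate e Γ'.bit1 ++ [Γ'.cons] := by
  induction e with
  | zero => rfl
  | succ e ih =>
    show sym (e+1) :: wrd (e+1) = _
    rw [ih]
    simp [sym, List.replicate_succ]

theorem trList_ones (e : ℕ) : trList [2^e - 1] = wrd (e+1) := by
  show trNat (2^e - 1) ++ [Γ'.cons] = _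
  rw [trNat_ones, wrd_succ_eq]

def nwrd (i : ℕ) : List ℕ := if i = 0 then [] else List.replicate (i-1) 3 ++ [1]

theorem nwrd_eq (i : ℕ) : nwrd i = (wrd i).map encG := by
  cases i with
  | zero => rfl
  | succ i =>
    rw [wrd_succ_eq]
    simp [nwrd, encG]

def cnw (i : ℕ) : Term' := Term'.cst (Encodable.encode (nwrd i))

theorem cnw_eq (i : ℕ) : cnw i = Term'.cst (nd (wrd i)) := by
  rw [cnw, nwrd_eq]; rfl

noncomputable def p₀ : ℕ := pc (tr l₀, none)

noncomputable def DL (e : ℕ) : List Atom :=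
  (rootP, [cnw 0]) :: (nodeP, [cnw 0]) ::
  (((List.range (e+1)).flatMap fun i =>
    [(edgeP (sym i), [cnw i, cnw (i+1)]), (nodeP, [cnw (i+1)])]) ++
  [(p₀, [cnw (e+1), cnw 0, cnw 0, cnw 0])])

theorem DL_facts (e : ℕ) : ∀ a ∈ DL e, isFact a := by
  intro a ha
  simp only [DL, List.mem_cons, List.mem_append, List.mem_flatMap, List.mem_range,
    List.mem_singleton, List.not_mem_nil, or_false] at ha
  rcases ha with rfl | rfl | ⟨i, hi, ha⟩ | rfl <;>
    first
    | (intro t ht; fin_cases ht <;> rfl)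
    | (rcases ha with rfl | rfl <;> (intro t ht; fin_cases ht <;> rfl))
  done

/-- The initial stack-pointer valuation. -/
def t₀ (e : ℕ) : K' → Term'
  | K'.main => cnw (e+1)
  | K'.rev => cnw 0
  | K'.aux => cnw 0
  | K'.stack => cnw 0

theorem confAtom_init (e : ℕ) :
    confAtom (tr l₀) none (t₀ e) = (p₀, [cnw (e+1), cnw 0, cnw 0, cnw 0]) := rfl

theorem rep_wrd {I : Set Atom} {e : ℕ} (hD : ∀ a ∈ DL e, a ∈ I) :
    ∀ i, i ≤ e + 1 → Rep I (wrd i) (cnw i) := by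
  intro i
  induction i with
  | zero =>
    intro _
    refine ⟨?_, ?_⟩ <;> rw [cnw_eq] <;> [exact hD _ (by simp [DL, cnw_eq]);
      exact hD _ (by simp [DL, cnw_eq])]
  | succ i ih =>
    intro hi
    have hi' : i < e + 1 := by omega
    have hedge : (edgeP (sym i), [cnw i, cnw (i+1)]) ∈ I := by
      refine hD _ ?_
      simp only [DL, List.mem_cons, List.mem_append, List.mem_flatMap, List.mem_range]
      exact Or.inr (Or.inr (Or.inl ⟨i, hi', by simp⟩))
    have hnode : (nodeP, [cnw (i+1)]) ∈ I := by
      refine hD _ ?_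
      simp only [DL, List.mem_cons, List.mem_append, List.mem_flatMap, List.mem_range]
      exact Or.inr (Or.inr (Or.inl ⟨i, hi', by simp⟩))
    refine ⟨by rw [cnw_eq] at hnode ⊢; exact hnode, cnw i, ?_, ih (by omega)⟩
    exact hedge

theorem halt_implies_cert (e : ℕ)
    (hh : ∃ v' S', Reaches mstep (m₀ (2^e - 1)) (TM2.Stmt.halt, v', S')) :
    [] ∈ cert Q0 (DL e).toFinset Rules := by
  intro I hDI hsat
  have hD : ∀ a ∈ DL e, a ∈ I := fun a ha => hDI (by simpa using ha)
  have hrep : ∀ k, Rep I ((m₀ (2^e - 1)).2.2 k) (t₀ e k) := by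
    intro k
    cases k with
    | main =>
      show Rep I (trList [2^e - 1]) (cnw (e+1))
      rw [trList_ones]
      exact rep_wrd hD (e+1) le_rfl
    | rev => exact rep_wrd hD 0 (by omega)
    | aux => exact rep_wrd hD 0 (by omega)
    | stack => exact rep_wrd hD 0 (by omega)
  have hc : confAtom (m₀ (2^e - 1)).1 (m₀ (2^e - 1)).2.1 (t₀ e) ∈ I := by
    show confAtom (tr l₀) none (t₀ e) ∈ I
    rw [confAtom_init]
    exact hD _ (by simp [DL])
  obtain ⟨v', S', hre⟩ := hh
  have hhalt : (haltP, ([] : List Term')) ∈ I :=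
    complete_halt hsat (tr_mem_QS l₀_mem) hrep hc hre
  refine ⟨id, fun n => rfl, ?_, rfl⟩
  intro a ha
  simp only [Q0, Finset.mem_singleton] at ha
  subst ha
  simpa [mapAtom] using hhalt

/- ### The canonical counter-model -/

def symOf : ℕ → Γ'
  | 0 => Γ'.consₗ
  | 1 => Γ'.cons
  | 2 => Γ'.bit0
  | _ => Γ'.bit1

theorem symOf_encG (s : Γ') : symOf (encG s) = s := by cases s <;> rfl

def treeF : Set Atom :=
  { a | a = (rootP, [Term'.cst (nd [])]) ∨ (∃ w, a = (nodeP, [Term'.cst (nd w)])) ∨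
      ∃ w s, a = (edgeP s, [Term'.cst (nd w), Term'.cst (nd (s :: w))]) }

def EMod (e : ℕ) : Set Atom :=
  treeF ∪ { a | ∃ q v S, q ∈ QS ∧ Reaches mstep (m₀ (2^e - 1)) (q, v, S) ∧
    a = confAtom q v (fun k => Term'.cst (nd (S k))) }

theorem not_halt_EM {e : ℕ} : (haltP, ([] : List Term')) ∉ EMod e := by
  rintro ((h | ⟨w, h⟩ | ⟨w, s, h⟩) | ⟨q, v, S, hq, hre, heq⟩)
  · have := congrArg Prod.fst h; simp [haltP, rootP] at this
  · have := congrArg Prod.fst h; simp [haltP, nodeP] at this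
  · have := congrArg Prod.fst h
    have h2 := edgeP_range s
    simp only [haltP] at this
    omega
  · have := congrArg Prod.fst heq
    have h2 := pc_ge (q, v)
    simp only [haltP, confAtom] at this
    omega

theorem root_inv {e : ℕ} {l : List Term'} (h : ((rootP, l) : Atom) ∈ EMod e) :
    l = [Term'.cst (nd [])] := by
  rcases h with (h | ⟨w, h⟩ | ⟨w, s, h⟩) | ⟨q, v, S, hq, hre, heq⟩
  · exact (Prod.ext_iff.1 h).2
  · have := congrArg Prod.fst h; simp [rootP, nodeP] at this
  · have := congrArg Prod.fst h
    have h2 := edgeP_range s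
    simp only [rootP] at this
    omega
  · have := congrArg Prod.fst heq
    have h2 := pc_ge (q, v)
    simp only [rootP, confAtom] at this
    omega

theorem node_inv {e : ℕ} {l : List Term'} (h : ((nodeP, l) : Atom) ∈ EMod e) :
    ∃ w, l = [Term'.cst (nd w)] := by
  rcases h with (h | ⟨w, h⟩ | ⟨w, s, h⟩) | ⟨q, v, S, hq, hre, heq⟩
  · have := congrArg Prod.fst h; simp [rootP, nodeP] at this
  · exact ⟨w, (Prod.ext_iff.1 h).2⟩
  · have := congrArg Prod.fst h
    have h2 := edgeP_range s
    simp only [nodeP] at this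
    omega
  · have := congrArg Prod.fst heq
    have h2 := pc_ge (q, v)
    simp only [nodeP, confAtom] at this
    omega

theorem edge_inv {e : ℕ} {s : Γ'} {l : List Term'} (h : ((edgeP s, l) : Atom) ∈ EMod e) :
    ∃ w, l = [Term'.cst (nd w), Term'.cst (nd (s :: w))] := by
  rcases h with (h | ⟨w, h⟩ | ⟨w, s', h⟩) | ⟨q, v, S, hq, hre, heq⟩
  · have := congrArg Prod.fst h
    have h2 := edgeP_range s
    simp only [rootP] at this
    omega
  · have := congrArg Prod.fst h
    have h2 := edgeP_range s
    simp only [nodeP] at this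
    omega
  · have h1 := congrArg Prod.fst h
    have : s' = s := edgeP_inj h1.symm
    subst this
    exact ⟨w, (Prod.ext_iff.1 h).2⟩
  · have := congrArg Prod.fst heq
    have h2 := pc_ge (q, v)
    have h3 := edgeP_range s
    simp only [confAtom] at this
    omega

theorem cst_inj {m n : ℕ} (h : Term'.cst m = Term'.cst n) : m = n := Sum.inl.inj h

theorem conf_inv {e : ℕ} {q : St} {v : Option Γ'} {l : List Term'} (hq : (q, v) ∈ TQ)
    (h : ((pc (q, v), l) : Atom) ∈ EMod e) :
    ∃ S : K' → List Γ', Reaches mstep (m₀ (2^e - 1)) (q, v, S) ∧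
      l = [Term'.cst (nd (S K'.main)), Term'.cst (nd (S K'.rev)),
           Term'.cst (nd (S K'.aux)), Term'.cst (nd (S K'.stack))] := by
  rcases h with (h | ⟨w, h⟩ | ⟨w, s, h⟩) | ⟨q₂, v₂, S, hq₂, hre, heq⟩
  · have := congrArg Prod.fst h
    have h2 := pc_ge (q, v)
    simp only [rootP] at this
    omega
  · have := congrArg Prod.fst h
    have h2 := pc_ge (q, v)
    simp only [nodeP] at this
    omega
  · have := congrArg Prod.fst h
    have h2 := pc_ge (q, v)
    have h3 := edgeP_range s
    omega
  · have h1 := congrArg Prod.fst heq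
    simp only [confAtom] at h1
    have h2 : ((q, v) : St × Option Γ') = (q₂, v₂) := pc_inj hq (mem_TQ hq₂) h1
    have hqq : q = q₂ := congrArg Prod.fst h2
    have hvv : v = v₂ := congrArg Prod.snd h2
    subst hqq; subst hvv
    exact ⟨S, hre, (Prod.ext_iff.1 heq).2⟩

theorem sat_tree (e : ℕ) : satTGD (EMod e) treeRule := by
  intro h hcp hbody
  have h1 : (nodeP, [h (Term'.var 0)]) ∈ EMod e := by
    have := hbody (nodeP, [Term'.var 0]) (by simp [treeRule])
    simpa [mapAtom] using this
  obtain ⟨w, hw⟩ := node_inv h1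
  have h0 : h (Term'.var 0) = Term'.cst (nd w) := by simpa using hw
  refine ⟨asg (fun n => if n = 0 then Term'.cst (nd w)
      else Term'.cst (nd (symOf (n - 1) :: w))), constPres_asg _, ?_, ?_⟩
  · intro m hm
    obtain ⟨a, ha, hv⟩ := hm
    simp only [treeRule, Finset.mem_singleton] at ha
    subst ha
    simp only [List.mem_singleton] at hv
    have hm0 : m = 0 := by
      have := hv
      simp only [Term'.var, Sum.inr.injEq] at this
      exact this
    subst hm0
    simp [h0]
  · intro a ha
    have hgs : ∀ s : Γ',
        (if 1 + encG s = 0 then Term'.cst (nd w)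
          else Term'.cst (nd (symOf (1 + encG s - 1) :: w))) = Term'.cst (nd (s :: w)) := by
      intro s
      rw [if_neg (by omega), Nat.add_sub_cancel_left, symOf_encG]
    simp only [treeRule, Finset.mem_union, Finset.mem_image, Finset.mem_univ, true_and] at ha
    rcases ha with ⟨s, rfl⟩ | ⟨s, rfl⟩
    · left; right; right
      refine ⟨w, s, ?_⟩
      simp [mapAtom, asg_var, hgs s, symOf_encG]
    · left; right; left
      refine ⟨s :: w, ?_⟩
      simp [mapAtom, asg_var, hgs s, symOf_encG]

/- ### The counter-model satisfies the configuration rules -/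

theorem sat_conf (e : ℕ)
    (hnh : ¬ ∃ v' S', Reaches mstep (m₀ (2^e - 1)) (TM2.Stmt.halt, v', S')) :
    ∀ x ∈ TQ, ∀ σ ∈ ruleOf x, satTGD (EMod e) σ := by
  rintro ⟨q, v⟩ hx σ hσ h hcp hbody
  cases q with
  | push k f q₁ =>
    simp only [ruleOf, Finset.mem_singleton] at hσ
    subst hσ
    have hcf : ((pc (TM2.Stmt.push k f q₁, v),
        [h (ptr K'.main), h (ptr K'.rev), h (ptr K'.aux), h (ptr K'.stack)]) : Atom)
        ∈ EMod e := by
      have := hbody (confAtom (TM2.Stmt.push k f q₁) v ptr) (by simp)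
      simpa [mapAtom, confAtom] using this
    obtain ⟨S, hre, hl⟩ := conf_inv hx hcf
    simp only [List.cons.injEq, and_true] at hl
    obtain ⟨e1, e2, e3, e4⟩ := hl
    have hent : ∀ j, h (ptr j) = Term'.cst (nd (S j)) := by intro j; cases j <;> assumption
    have hedge : ((edgeP (f v), [h (ptr k), h yv]) : Atom) ∈ EMod e := by
      have := hbody (edgeP (f v), [ptr k, yv]) (by simp)
      simpa [mapAtom] using this
    obtain ⟨w, hw⟩ := edge_inv hedge
    simp only [List.cons.injEq, and_true] at hw
    obtain ⟨hw1, hw2⟩ := hw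
    have hwk : w = S k := (nd_inj (cst_inj ((hent k).symm.trans hw1))).symm
    subst hwk
    refine ⟨h, hcp, fun _ _ => rfl, ?_⟩
    intro a ha
    simp only [Finset.mem_singleton] at ha
    subst ha
    right
    refine ⟨q₁, v, Function.update S k (f v :: S k), mstep_QS (v := v) (S := S) (mem_TQ' hx) rfl,
      Relation.ReflTransGen.tail hre (mstep_rel rfl), ?_⟩
    have hent2 : ∀ j, h (Function.update ptr k yv j) =
        Term'.cst (nd (Function.update S k (f v :: S k) j)) := by
      intro j
      rcases eq_or_ne j k with rfl | hne
      · rw [Function.update_self, Function.update_self]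
        exact hw2
      · rw [Function.update_of_ne hne, Function.update_of_ne hne, hent]
    simp [mapAtom, confAtom, hent2]
  | peek k f q₁ =>
    simp only [ruleOf, Finset.mem_insert, Finset.mem_image, Finset.mem_univ, true_and] at hσ
    rcases hσ with rfl | ⟨s, rfl⟩
    · have hcf : ((pc (TM2.Stmt.peek k f q₁, v),
          [h (ptr K'.main), h (ptr K'.rev), h (ptr K'.aux), h (ptr K'.stack)]) : Atom)
          ∈ EMod e := by
        have := hbody (confAtom (TM2.Stmt.peek k f q₁) v ptr) (by simp)
        simpa [mapAtom, confAtom] using this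
      obtain ⟨S, hre, hl⟩ := conf_inv hx hcf
      simp only [List.cons.injEq, and_true] at hl
      obtain ⟨e1, e2, e3, e4⟩ := hl
      have hent : ∀ j, h (ptr j) = Term'.cst (nd (S j)) := by intro j; cases j <;> assumption
      have hroot : ((rootP, [h (ptr k)]) : Atom) ∈ EMod e := by
        have := hbody (rootP, [ptr k]) (by simp)
        simpa [mapAtom] using this
      have hk0 : S k = [] := by
        have := root_inv hroot
        simp only [List.cons.injEq, and_true] at this
        exact nd_inj (cst_inj ((hent k).symm.trans this))
      refine ⟨h, hcp, fun _ _ => rfl, ?_⟩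
      intro a ha
      simp only [Finset.mem_singleton] at ha
      subst ha
      right
      refine ⟨q₁, f v none, S, mstep_QS (v := v) (S := S) (mem_TQ' hx) rfl, ?_, ?_⟩
      · refine Relation.ReflTransGen.tail hre (mstep_rel ?_)
        simp [mstep, hk0]
      · simp [mapAtom, confAtom, hent]
    · have hcf : ((pc (TM2.Stmt.peek k f q₁, v),
          [h (ptr K'.main), h (ptr K'.rev), h (ptr K'.aux), h (ptr K'.stack)]) : Atom)
          ∈ EMod e := by
        have := hbody (confAtom (TM2.Stmt.peek k f q₁) v ptr) (by simp)
        simpa [mapAtom, confAtom] using this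
      obtain ⟨S, hre, hl⟩ := conf_inv hx hcf
      simp only [List.cons.injEq, and_true] at hl
      obtain ⟨e1, e2, e3, e4⟩ := hl
      have hent : ∀ j, h (ptr j) = Term'.cst (nd (S j)) := by intro j; cases j <;> assumption
      have hedge : ((edgeP s, [h yv, h (ptr k)]) : Atom) ∈ EMod e := by
        have := hbody (edgeP s, [yv, ptr k]) (by simp)
        simpa [mapAtom] using this
      obtain ⟨w, hw⟩ := edge_inv hedge
      simp only [List.cons.injEq, and_true] at hw
      obtain ⟨hw1, hw2⟩ := hw
      have hk0 : S k = s :: w := nd_inj (cst_inj ((hent k).symm.trans hw2))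
      refine ⟨h, hcp, fun _ _ => rfl, ?_⟩
      intro a ha
      simp only [Finset.mem_singleton] at ha
      subst ha
      right
      refine ⟨q₁, f v (some s), S, mstep_QS (v := v) (S := S) (mem_TQ' hx) rfl, ?_, ?_⟩
      · refine Relation.ReflTransGen.tail hre (mstep_rel ?_)
        simp [mstep, hk0]
      · simp [mapAtom, confAtom, hent]
  | pop k f q₁ =>
    simp only [ruleOf, Finset.mem_insert, Finset.mem_image, Finset.mem_univ, true_and] at hσ
    rcases hσ with rfl | ⟨s, rfl⟩
    · have hcf : ((pc (TM2.Stmt.pop k f q₁, v),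
          [h (ptr K'.main), h (ptr K'.rev), h (ptr K'.aux), h (ptr K'.stack)]) : Atom)
          ∈ EMod e := by
        have := hbody (confAtom (TM2.Stmt.pop k f q₁) v ptr) (by simp)
        simpa [mapAtom, confAtom] using this
      obtain ⟨S, hre, hl⟩ := conf_inv hx hcf
      simp only [List.cons.injEq, and_true] at hl
      obtain ⟨e1, e2, e3, e4⟩ := hl
      have hent : ∀ j, h (ptr j) = Term'.cst (nd (S j)) := by intro j; cases j <;> assumption
      have hroot : ((rootP, [h (ptr k)]) : Atom) ∈ EMod e := by
        have := hbody (rootP, [ptr k]) (by simp)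
        simpa [mapAtom] using this
      have hk0 : S k = [] := by
        have := root_inv hroot
        simp only [List.cons.injEq, and_true] at this
        exact nd_inj (cst_inj ((hent k).symm.trans this))
      have hS' : ∀ j, Function.update S k (S k).tail j = S j := by
        intro j
        rcases eq_or_ne j k with rfl | hne
        · rw [Function.update_self, hk0]
          rfl
        · rw [Function.update_of_ne hne]
      refine ⟨h, hcp, fun _ _ => rfl, ?_⟩
      intro a ha
      simp only [Finset.mem_singleton] at ha
      subst ha
      right
      refine ⟨q₁, f v none, Function.update S k (S k).tail,
        mstep_QS (v := v) (S := S) (mem_TQ' hx) rfl, ?_, ?_⟩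
      · refine Relation.ReflTransGen.tail hre (mstep_rel ?_)
        simp [mstep, hk0]
      · simp [mapAtom, confAtom, hent, hS']
    · have hcf : ((pc (TM2.Stmt.pop k f q₁, v),
          [h (ptr K'.main), h (ptr K'.rev), h (ptr K'.aux), h (ptr K'.stack)]) : Atom)
          ∈ EMod e := by
        have := hbody (confAtom (TM2.Stmt.pop k f q₁) v ptr) (by simp)
        simpa [mapAtom, confAtom] using this
      obtain ⟨S, hre, hl⟩ := conf_inv hx hcf
      simp only [List.cons.injEq, and_true] at hl
      obtain ⟨e1, e2, e3, e4⟩ := hl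
      have hent : ∀ j, h (ptr j) = Term'.cst (nd (S j)) := by intro j; cases j <;> assumption
      have hedge : ((edgeP s, [h yv, h (ptr k)]) : Atom) ∈ EMod e := by
        have := hbody (edgeP s, [yv, ptr k]) (by simp)
        simpa [mapAtom] using this
      obtain ⟨w, hw⟩ := edge_inv hedge
      simp only [List.cons.injEq, and_true] at hw
      obtain ⟨hw1, hw2⟩ := hw
      have hk0 : S k = s :: w := nd_inj (cst_inj ((hent k).symm.trans hw2))
      have hent2 : ∀ j, h (Function.update ptr k yv j) =
          Term'.cst (nd (Function.update S k (S k).tail j)) := by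
        intro j
        rcases eq_or_ne j k with rfl | hne
        · rw [Function.update_self, Function.update_self, hk0]
          exact hw1
        · rw [Function.update_of_ne hne, Function.update_of_ne hne, hent]
      refine ⟨h, hcp, fun _ _ => rfl, ?_⟩
      intro a ha
      simp only [Finset.mem_singleton] at ha
      subst ha
      right
      refine ⟨q₁, f v (some s), Function.update S k (S k).tail,
        mstep_QS (v := v) (S := S) (mem_TQ' hx) rfl, ?_, ?_⟩
      · refine Relation.ReflTransGen.tail hre (mstep_rel ?_)
        simp [mstep, hk0]
      · simp [mapAtom, confAtom, hent2]
  | load g q₁ =>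
    simp only [ruleOf, Finset.mem_singleton] at hσ
    subst hσ
    have hcf : ((pc (TM2.Stmt.load g q₁, v),
        [h (ptr K'.main), h (ptr K'.rev), h (ptr K'.aux), h (ptr K'.stack)]) : Atom)
        ∈ EMod e := by
      have := hbody (confAtom (TM2.Stmt.load g q₁) v ptr) (by simp)
      simpa [mapAtom, confAtom] using this
    obtain ⟨S, hre, hl⟩ := conf_inv hx hcf
    simp only [List.cons.injEq, and_true] at hl
    obtain ⟨e1, e2, e3, e4⟩ := hl
    have hent : ∀ j, h (ptr j) = Term'.cst (nd (S j)) := by intro j; cases j <;> assumption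
    refine ⟨h, hcp, fun _ _ => rfl, ?_⟩
    intro a ha
    simp only [Finset.mem_singleton] at ha
    subst ha
    right
    refine ⟨q₁, g v, S, mstep_QS (v := v) (S := S) (mem_TQ' hx) rfl,
      Relation.ReflTransGen.tail hre (mstep_rel rfl), ?_⟩
    simp [mapAtom, confAtom, hent]
  | branch p q₁ q₂ =>
    simp only [ruleOf, Finset.mem_singleton] at hσ
    subst hσ
    have hcf : ((pc (TM2.Stmt.branch p q₁ q₂, v),
        [h (ptr K'.main), h (ptr K'.rev), h (ptr K'.aux), h (ptr K'.stack)]) : Atom)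
        ∈ EMod e := by
      have := hbody (confAtom (TM2.Stmt.branch p q₁ q₂) v ptr) (by simp)
      simpa [mapAtom, confAtom] using this
    obtain ⟨S, hre, hl⟩ := conf_inv hx hcf
    simp only [List.cons.injEq, and_true] at hl
    obtain ⟨e1, e2, e3, e4⟩ := hl
    have hent : ∀ j, h (ptr j) = Term'.cst (nd (S j)) := by intro j; cases j <;> assumption
    refine ⟨h, hcp, fun _ _ => rfl, ?_⟩
    intro a ha
    simp only [Finset.mem_singleton] at ha
    subst ha
    right
    refine ⟨cond (p v) q₁ q₂, v, S, mstep_QS (v := v) (S := S) (mem_TQ' hx) rfl,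
      Relation.ReflTransGen.tail hre (mstep_rel rfl), ?_⟩
    simp [mapAtom, confAtom, hent]
  | goto f =>
    simp only [ruleOf, Finset.mem_singleton] at hσ
    subst hσ
    have hcf : ((pc (TM2.Stmt.goto f, v),
        [h (ptr K'.main), h (ptr K'.rev), h (ptr K'.aux), h (ptr K'.stack)]) : Atom)
        ∈ EMod e := by
      have := hbody (confAtom (TM2.Stmt.goto f) v ptr) (by simp)
      simpa [mapAtom, confAtom] using this
    obtain ⟨S, hre, hl⟩ := conf_inv hx hcf
    simp only [List.cons.injEq, and_true] at hl
    obtain ⟨e1, e2, e3, e4⟩ := hl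
    have hent : ∀ j, h (ptr j) = Term'.cst (nd (S j)) := by intro j; cases j <;> assumption
    refine ⟨h, hcp, fun _ _ => rfl, ?_⟩
    intro a ha
    simp only [Finset.mem_singleton] at ha
    subst ha
    right
    refine ⟨tr (f v), v, S, mstep_QS (v := v) (S := S) (mem_TQ' hx) rfl,
      Relation.ReflTransGen.tail hre (mstep_rel rfl), ?_⟩
    simp [mapAtom, confAtom, hent]
  | halt =>
    simp only [ruleOf, Finset.mem_singleton] at hσ
    subst hσ
    have hcf : ((pc (TM2.Stmt.halt, v),
        [h (ptr K'.main), h (ptr K'.rev), h (ptr K'.aux), h (ptr K'.stack)]) : Atom)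
        ∈ EMod e := by
      have := hbody (confAtom TM2.Stmt.halt v ptr) (by simp)
      simpa [mapAtom, confAtom] using this
    obtain ⟨S, hre, hl⟩ := conf_inv hx hcf
    exact absurd ⟨v, S, hre⟩ hnh

/- ### The counter-model contains the database -/

theorem wrd_zero : wrd 0 = [] := rfl

theorem DL_sub (e : ℕ) : ∀ a ∈ DL e, a ∈ EMod e := by
  intro a ha
  simp only [DL, List.mem_cons, List.mem_append, List.mem_flatMap, List.mem_range,
    List.mem_singleton, List.not_mem_nil, or_false] at ha
  rcases ha with rfl | rfl | ⟨i, hi, ha⟩ | rfl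
  · left; left; rw [cnw_eq]; rfl
  · left; right; left; exact ⟨wrd 0, by rw [cnw_eq]⟩
  · rcases ha with rfl | rfl
    · left; right; right
      exact ⟨wrd i, sym i, by rw [cnw_eq, cnw_eq]; rfl⟩
    · left; right; left
      exact ⟨wrd (i+1), by rw [cnw_eq]⟩
  · right
    refine ⟨tr l₀, none, K'.elim (trList [2^e - 1]) [] [] [], tr_mem_QS l₀_mem,
      Relation.ReflTransGen.refl, ?_⟩
    simp only [confAtom, K'.elim_main, K'.elim_rev, K'.elim_aux, K'.elim_stack,
      cnw_eq, trList_ones, p₀, wrd_zero]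

theorem model_sat (e : ℕ)
    (hnh : ¬ ∃ v' S', Reaches mstep (m₀ (2^e - 1)) (TM2.Stmt.halt, v', S')) :
    ∀ σ ∈ Rules, satTGD (EMod e) σ := by
  intro σ hσ
  rcases rules_cases hσ with rfl | ⟨x, hx, hm⟩
  · exact sat_tree e
  · exact sat_conf e hnh x hx σ hm

theorem cert_iff (e : ℕ) :
    [] ∈ cert Q0 (DL e).toFinset Rules ↔
      (StateTransition.eval (TM2.step tr) (init cU [2^e - 1])).Dom := by
  rw [halts_iff]
  constructor
  · intro hc
    by_contra hnh
    obtain ⟨h, hcp, hatoms, -⟩ := hc (EMod e)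
      (by intro a ha; exact DL_sub e a (by simpa using ha)) (model_sat e hnh)
    have := hatoms (haltP, ([] : List Term')) (by simp [Q0])
    exact not_halt_EM (by simpa [mapAtom] using this)
  · exact halt_implies_cert e

/- ### Computability of the database map -/

theorem nwrd_primrec : Primrec nwrd := by
  have hrep : Primrec (fun n : ℕ => List.replicate n (3:ℕ)) := by
    have := Primrec.list_map Primrec.list_range
      ((Primrec.const (3:ℕ)).comp Primrec.fst).to₂
    exact this.of_eq fun n => by
      simp
  unfold nwrd
  apply Primrec.ite (Primrec.eq.comp Primrec.id (Primrec.const 0)) (Primrec.const [])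
  exact Primrec.list_append.comp
    (hrep.comp (Primrec.pred.comp Primrec.id)) (Primrec.const [1])

theorem cnw_primrec : Primrec cnw := by
  unfold cnw
  exact Primrec.sumInl.comp (Primrec.encode.comp nwrd_primrec)

def esym (i : ℕ) : ℕ := if i = 0 then 4 else 6

theorem esym_eq (i : ℕ) : esym i = edgeP (sym i) := by
  unfold esym sym edgeP
  split <;> rfl

theorem esym_primrec : Primrec esym := by
  unfold esym
  exact Primrec.ite (Primrec.eq.comp Primrec.id (Primrec.const 0))
    (Primrec.const 4) (Primrec.const 6)

theorem DL_computable : Computable DL := by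
  have hterm2 : ∀ {f : ℕ → ℕ}, Primrec f → Primrec (fun e => (Term'.cst (Encodable.encode (nwrd (f e))) : Term')) :=
    fun hf => Primrec.sumInl.comp (Primrec.encode.comp (nwrd_primrec.comp hf))
  -- the flatMap part
  have hg : Primrec₂ (fun (_ : ℕ) (i : ℕ) =>
      ([(edgeP (sym i), [cnw i, cnw (i+1)]), (nodeP, [cnw (i+1)])] : List Atom)) := by
    have hcnwi : Primrec (fun i : ℕ => cnw i) := cnw_primrec
    have hcnwi1 : Primrec (fun i : ℕ => cnw (i+1)) := cnw_primrec.comp Primrec.succ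
    have hatom1 : Primrec (fun i : ℕ => ((edgeP (sym i), [cnw i, cnw (i+1)]) : Atom)) := by
      have hl : Primrec (fun i : ℕ => ([cnw i, cnw (i+1)] : List Term')) :=
        Primrec.list_cons.comp hcnwi
          (Primrec.list_cons.comp hcnwi1 (Primrec.const []))
      have hp : Primrec (fun i : ℕ => edgeP (sym i)) :=
        esym_primrec.of_eq fun i => esym_eq i
      exact hp.pair hl
    have hatom2 : Primrec (fun i : ℕ => ((nodeP, [cnw (i+1)]) : Atom)) :=
      (Primrec.const nodeP).pair (Primrec.list_cons.comp hcnwi1 (Primrec.const []))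
    exact ((Primrec.list_cons.comp hatom1
      (Primrec.list_cons.comp hatom2 (Primrec.const []))).comp Primrec.snd).to₂
  have hflat : Primrec (fun e : ℕ => (List.range (e+1)).flatMap fun i =>
      ([(edgeP (sym i), [cnw i, cnw (i+1)]), (nodeP, [cnw (i+1)])] : List Atom)) :=
    Primrec.list_flatMap (Primrec.list_range.comp Primrec.succ) hg
  have hlast : Primrec (fun e : ℕ => ([(p₀, [cnw (e+1), cnw 0, cnw 0, cnw 0])] : List Atom)) := by
    have hl : Primrec (fun e : ℕ => ([cnw (e+1), cnw 0, cnw 0, cnw 0] : List Term')) :=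
      Primrec.list_cons.comp (cnw_primrec.comp Primrec.succ)
        (Primrec.const [cnw 0, cnw 0, cnw 0])
    exact Primrec.list_cons.comp ((Primrec.const p₀).pair hl) (Primrec.const [])
  have : Primrec DL := by
    unfold DL
    exact Primrec.list_cons.comp (Primrec.const (rootP, [cnw 0]))
      (Primrec.list_cons.comp (Primrec.const (nodeP, [cnw 0]))
        (Primrec.list_append.comp hflat hlast))
  exact this.to_comp

/- ### The reduction -/

theorem main_red :
    (fun c : Nat.Partrec.Code => (c.eval 0).Dom) ≤₀
      (fun l : List Atom => (∀ a ∈ l, isFact a) ∧ [] ∈ cert Q0 l.toFinset Rules) := by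
  refine ⟨fun c => DL (Encodable.encode c), DL_computable.comp Computable.encode, ?_⟩
  intro c
  constructor
  · intro hd
    refine ⟨DL_facts _, ?_⟩
    rw [cert_iff, halts_iff', blen_pow, Denumerable.ofNat_encode]
    exact hd
  · rintro ⟨-, hc⟩
    rw [cert_iff, halts_iff', blen_pow, Denumerable.ofNat_encode] at hc
    exact hc

end PwlU

/-- There are a fixed piece-wise linear set `Σ` of TGDs and a fixed
Boolean CQ `q` such that it is undecidable, given a database `D` (encoded as a list
of facts), whether `() ∈ cert(q,D,Σ)`: CQ answering under piece-wise linear sets of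
TGDs is undecidable in data complexity. -/
theorem pwl_cq_answering_undecidable :
    ∃ (S : Finset TGD) (q : CQ), PWL S ∧ (∀ σ ∈ S, TGD.wf σ) ∧ CQ.wf q ∧
      q.output = [] ∧
      ¬ ComputablePred (fun l : List Atom =>
          (∀ a ∈ l, isFact a) ∧ [] ∈ cert q l.toFinset S) := by
  refine ⟨PwlU.Rules, PwlU.Q0, PwlU.rules_pwl, PwlU.rules_wf, PwlU.Q0_wf, rfl, ?_⟩
  intro hcp
  exact ComputablePred.halting_problem 0
    (ComputablePred.computable_of_manyOneReducible PwlU.main_red hcp)
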